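/- Let A = J_{m₁}(α) ⊕ J_{m₂}(α) with m₁ > m₂ ≥ 1 and the same eigenvalue α. If P ∈ M_{m₁+m₂}(ℂ) is an idempotent commuting with A, then there exists an invertible X ∈ M_{m₁+m₂}(ℂ) commuting with A such that X P X⁻¹ is one of: 0, I, I_{m₁} ⊕ 0_{m₂}, or 0_{m₁} ⊕ I_{m₂}. -/

import Mathlib

open Matrix

/-- The `m×m` Jordan block with eigenvalue `α`. -/
def jordanBlock (m : ℕ) (α : ℂ) : Matrix (Fin m) (Fin m) ℂ :=
  fun i j => if (i : ℕ) = (j : ℕ) then α else if (i : ℕ) + 1 = (j : ℕ) then 1 else 0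

lemma jb0_apply {m : ℕ} (i j : Fin m) :
    jordanBlock m 0 i j = if (i : ℕ) + 1 = (j : ℕ) then 1 else 0 := by
  unfold jordanBlock
  split_ifs <;> first | rfl | (exfalso; omega)

lemma mulJ {m n : ℕ} (Y : Matrix (Fin m) (Fin n) ℂ) (i : Fin m) (j : ℕ) (hj : j + 1 < n) :
    (Y * jordanBlock n 0) i ⟨j + 1, hj⟩ = Y i ⟨j, by omega⟩ := by
  rw [mul_apply, Finset.sum_eq_single (⟨j, by omega⟩ : Fin n)]
  · rw [jb0_apply]; simp
  · intro k _ hk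
    rw [jb0_apply, if_neg, mul_zero]
    intro hc
    have hc' : (k:ℕ) + 1 = j + 1 := by simpa using hc
    exact hk (Fin.ext (by simpa using hc'))
  · simp

lemma mulJ0 {m n : ℕ} (Y : Matrix (Fin m) (Fin n) ℂ) (i : Fin m) (h0 : 0 < n) :
    (Y * jordanBlock n 0) i ⟨0, h0⟩ = 0 := by
  rw [mul_apply]
  refine Finset.sum_eq_zero fun k _ => ?_
  rw [jb0_apply, if_neg (by simp), mul_zero]

lemma Jmul {m n : ℕ} (Y : Matrix (Fin m) (Fin n) ℂ) (i : ℕ) (hi : i + 1 < m) (j : Fin n) :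
    (jordanBlock m 0 * Y) ⟨i, by omega⟩ j = Y ⟨i + 1, hi⟩ j := by
  rw [mul_apply, Finset.sum_eq_single (⟨i + 1, hi⟩ : Fin m)]
  · rw [jb0_apply]; simp
  · intro k _ hk
    rw [jb0_apply, if_neg, zero_mul]
    intro hc
    have hc' : (i:ℕ) + 1 = (k:ℕ) := by simpa using hc
    exact hk (Fin.ext (by simpa using hc'.symm))
  · simp

lemma Jmul_last {m n : ℕ} (Y : Matrix (Fin m) (Fin n) ℂ) (i : Fin m) (hi : (i : ℕ) + 1 = m)
    (j : Fin n) : (jordanBlock m 0 * Y) i j = 0 := by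
  rw [mul_apply]
  refine Finset.sum_eq_zero fun k _ => ?_
  rw [jb0_apply, if_neg (by omega), zero_mul]

section Struct
variable {m n : ℕ} {Y : Matrix (Fin m) (Fin n) ℂ}
  (hY : Y * jordanBlock n 0 = jordanBlock m 0 * Y)

include hY

/-- entries strictly below the main diagonal vanish -/
lemma struct_lt : ∀ (i : Fin m) (j : Fin n), (j : ℕ) < (i : ℕ) → Y i j = 0 := by
  suffices H : ∀ (t : ℕ) (i : Fin m) (j : Fin n), (j : ℕ) = t → (j : ℕ) < (i : ℕ) → Y i j = 0 by
    intro i j hj; exact H (j : ℕ) i j rfl hj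
  intro t
  induction t with
  | zero =>
    intro i j hj hlt
    have hi : ((i : ℕ) - 1) + 1 < m := by omega
    have h0 : 0 < n := j.pos
    have e1 := mulJ0 Y (⟨(i:ℕ) - 1, by omega⟩ : Fin m) h0
    rw [hY, Jmul Y ((i:ℕ) - 1) hi] at e1
    have : (⟨(i:ℕ) - 1 + 1, hi⟩ : Fin m) = i := Fin.ext (by simp; omega)
    rw [this] at e1
    have : (⟨0, h0⟩ : Fin n) = j := Fin.ext (by simp [hj])
    rwa [this] at e1
  | succ t ih =>
    intro i j hj hlt
    have hi : ((i : ℕ) - 1) + 1 < m := by omega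
    have hjn : t + 1 < n := by omega
    have e1 := mulJ Y (⟨(i:ℕ) - 1, by omega⟩ : Fin m) t hjn
    rw [hY, Jmul Y ((i:ℕ) - 1) hi] at e1
    have h2 : (⟨(i:ℕ) - 1 + 1, hi⟩ : Fin m) = i := Fin.ext (by simp; omega)
    rw [h2] at e1
    have h3 : (⟨t + 1, hjn⟩ : Fin n) = j := Fin.ext (by simp [hj])
    rw [h3] at e1
    rw [e1]
    exact ih ⟨(i:ℕ) - 1, by omega⟩ ⟨t, by omega⟩ rfl (by simp; omega)

/-- entries on diagonals too far below (in the rectangular sense) vanish -/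
lemma struct_diag : ∀ (i : Fin m) (j : Fin n), (j : ℕ) + m < (i : ℕ) + n → Y i j = 0 := by
  suffices H : ∀ (t : ℕ) (i : Fin m) (j : Fin n), m = (i : ℕ) + t + 1 →
      (j : ℕ) + m < (i : ℕ) + n → Y i j = 0 by
    intro i j hij; exact H (m - 1 - (i : ℕ)) i j (by omega) hij
  intro t
  induction t with
  | zero =>
    intro i j him hij
    have hjn : (j : ℕ) + 1 < n := by omega
    have e1 := mulJ Y i (j : ℕ) hjn
    have h3 : (⟨(j:ℕ), by omega⟩ : Fin n) = j := Fin.ext rfl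
    rw [h3, hY, Jmul_last Y i (by omega)] at e1
    exact e1.symm
  | succ t ih =>
    intro i j him hij
    have hi : (i : ℕ) + 1 < m := by omega
    have hjn : (j : ℕ) + 1 < n := by omega
    have e1 := mulJ Y i (j : ℕ) hjn
    have h3 : (⟨(j:ℕ), by omega⟩ : Fin n) = j := Fin.ext rfl
    rw [h3] at e1
    rw [hY] at e1
    have e2 := Jmul Y (i : ℕ) hi (⟨(j:ℕ) + 1, hjn⟩ : Fin n)
    have h4 : (⟨(i:ℕ), by omega⟩ : Fin m) = i := Fin.ext rfl
    rw [h4] at e2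
    rw [e2] at e1
    rw [← e1]
    exact ih ⟨(i:ℕ) + 1, hi⟩ ⟨(j:ℕ) + 1, hjn⟩ (by simp; omega) (by simp; omega)

omit hY in
/-- the main diagonal of a square commuting matrix is constant -/
lemma struct_diag_const {p : ℕ} {Z : Matrix (Fin p) (Fin p) ℂ}
    (hZ : Z * jordanBlock p 0 = jordanBlock p 0 * Z) (h0 : 0 < p) :
    ∀ i : Fin p, Z i i = Z ⟨0, h0⟩ ⟨0, h0⟩ := by
  suffices H : ∀ (t : ℕ) (ht : t < p), Z ⟨t, ht⟩ ⟨t, ht⟩ = Z ⟨0, h0⟩ ⟨0, h0⟩ by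
    intro i
    have := H (i : ℕ) i.isLt
    have hi : (⟨(i:ℕ), i.isLt⟩ : Fin p) = i := Fin.ext rfl
    rwa [hi] at this
  intro t
  induction t with
  | zero => intro _; rfl
  | succ t ih =>
    intro ht
    have hjn : t + 1 < p := ht
    have e1 := mulJ Z (⟨t, by omega⟩ : Fin p) t hjn
    rw [hZ, Jmul Z t hjn] at e1
    rw [← ih (by omega)]
    exact e1
end Struct

/-- weighted strict-triangularity gives nilpotency -/
lemma pow_eq_zero_of_weight {k : Type*} [Fintype k] [DecidableEq k] (M : Matrix k k ℂ)
    (w : k → ℕ) (B : ℕ) (hB : ∀ x, w x < B)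
    (hM : ∀ r c, w c ≤ w r → M r c = 0) : M ^ B = 0 := by
  have key : ∀ (t : ℕ) (r c : k), w c < w r + t → (M ^ t) r c = 0 := by
    intro t
    induction t with
    | zero =>
      intro r c hc
      rw [pow_zero]
      exact one_apply_ne (by rintro rfl; omega)
    | succ t ih =>
      intro r c hc
      rw [pow_succ', mul_apply]
      refine Finset.sum_eq_zero fun x _ => ?_
      by_cases hx : w x ≤ w r
      · rw [hM r x hx, zero_mul]
      · rw [ih x c (by omega), mul_zero]
  ext r c
  rw [Matrix.zero_apply]
  exact key B r c (by have := hB c; omega)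
lemma conj_core {k : Type*} [Fintype k] [DecidableEq k]
    (A P f : Matrix k k ℂ) (hP : P * P = P) (hf : f * f = f)
    (hPA : P * A = A * P) (hfA : f * A = A * f) (hnil : IsNilpotent (P - f)) :
    ∃ X : Matrix k k ℂ, IsUnit X ∧ X * A = A * X ∧ X * P * X⁻¹ = f := by
  set u := f * P + (1 - f) * (1 - P) with hu
  set v := P * f + (1 - P) * (1 - f) with hv
  have hPP : ∀ X : Matrix k k ℂ, X * P * P = X * P := fun X => by
    rw [Matrix.mul_assoc, hP]
  have hffX : ∀ X : Matrix k k ℂ, X * f * f = X * f := fun X => by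
    rw [Matrix.mul_assoc, hf]
  have huv : u * v = 1 - (P - f) * (P - f) := by
    simp only [hu, hv, mul_sub, sub_mul, mul_add, add_mul, mul_one, one_mul,
      ← Matrix.mul_assoc, hP, hf, hPP, hffX]
    abel
  have hD2 : IsNilpotent ((P - f) * (P - f)) := by
    obtain ⟨n, hn⟩ := hnil
    exact ⟨n, by rw [← pow_two, ← pow_mul, mul_comm, pow_mul, hn]; simp⟩
  have hwUnit : IsUnit (1 - (P - f) * (P - f)) := hD2.isUnit_one_sub
  have huvUnit : IsUnit (u * v) := huv ▸ hwUnit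
  have hu' : IsUnit u := by
    rw [Matrix.isUnit_iff_isUnit_det]
    have := (Matrix.isUnit_iff_isUnit_det _).mp huvUnit
    rw [Matrix.det_mul] at this
    exact isUnit_of_mul_isUnit_left this
  have cPA : Commute P A := hPA
  have cfA : Commute f A := hfA
  have cuA : Commute u A := by
    have c1 : Commute (f * P) A := cfA.mul_left cPA
    have c2 : Commute ((1 - f) * (1 - P)) A :=
      (((Commute.one_left A).sub_left cfA).mul_left ((Commute.one_left A).sub_left cPA))
    exact c1.add_left c2
  refine ⟨u, hu', cuA.eq, ?_⟩
  have huP : u * P = f * u := by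
    simp only [hu, mul_sub, sub_mul, mul_add, add_mul, mul_one, one_mul,
      ← Matrix.mul_assoc, hP, hf, hPP, hffX]
    abel
  rw [huP, Matrix.mul_assoc, Matrix.mul_nonsing_inv u ((Matrix.isUnit_iff_isUnit_det _).mp hu'),
    mul_one]


lemma jb_split (m : ℕ) (α : ℂ) :
    jordanBlock m α = jordanBlock m 0 + α • (1 : Matrix (Fin m) (Fin m) ℂ) := by
  ext i j
  rw [Matrix.add_apply, Matrix.smul_apply, Matrix.one_apply]
  show (if (i:ℕ) = (j:ℕ) then α else if (i:ℕ)+1 = (j:ℕ) then 1 else 0) =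
    (if (i:ℕ) = (j:ℕ) then 0 else if (i:ℕ)+1 = (j:ℕ) then 1 else 0) + α • (if i = j then 1 else 0)
  by_cases hij : (i : ℕ) = (j : ℕ)
  · rw [if_pos hij, if_pos hij, if_pos (Fin.ext hij)]; simp
  · rw [if_neg hij, if_neg hij, if_neg (fun hc => hij (congrArg Fin.val hc))]
    simp

theorem stmt_12 (m₁ m₂ : ℕ) (h₂ : 1 ≤ m₂) (h : m₂ < m₁) (α : ℂ)
    (A P : Matrix (Fin m₁ ⊕ Fin m₂) (Fin m₁ ⊕ Fin m₂) ℂ)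
    (hA : A = fromBlocks (jordanBlock m₁ α) 0 0 (jordanBlock m₂ α))
    (hP : P * P = P) (hPA : P * A = A * P) :
    ∃ X : Matrix (Fin m₁ ⊕ Fin m₂) (Fin m₁ ⊕ Fin m₂) ℂ, IsUnit X ∧ X * A = A * X ∧
      (X * P * X⁻¹ = 0 ∨ X * P * X⁻¹ = 1 ∨
       X * P * X⁻¹ = fromBlocks 1 0 0 0 ∨ X * P * X⁻¹ = fromBlocks 0 0 0 1) := by
  have hm₁ : 0 < m₁ := by omega
  have hm₂ : 0 < m₂ := h₂
  have hAN : A = fromBlocks (jordanBlock m₁ 0) 0 0 (jordanBlock m₂ 0) + α • 1 := by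
    rw [hA, jb_split m₁ α, jb_split m₂ α, ← fromBlocks_one, fromBlocks_smul, fromBlocks_add]
    simp
  set N : Matrix (Fin m₁ ⊕ Fin m₂) (Fin m₁ ⊕ Fin m₂) ℂ :=
    fromBlocks (jordanBlock m₁ 0) 0 0 (jordanBlock m₂ 0) with hNdef
  have hPN : P * N = N * P := by
    have h1 := hPA
    rw [hAN] at h1
    have h2 : P * N + α • P = N * P + α • P := by
      calc P * N + α • P = P * (N + α • 1) := by rw [mul_add, Matrix.mul_smul, mul_one]
        _ = (N + α • 1) * P := h1
        _ = N * P + α • P := by rw [add_mul, Matrix.smul_mul, one_mul]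
    exact add_right_cancel h2
  obtain ⟨Q11, Q12, Q21, Q22, rfl⟩ :
      ∃ a b c d, P = fromBlocks a b c d := ⟨_, _, _, _, (fromBlocks_toBlocks P).symm⟩
  have hPidem := hP
  rw [hNdef, fromBlocks_multiply, fromBlocks_multiply] at hPN
  simp only [Matrix.mul_zero, Matrix.zero_mul, add_zero, zero_add] at hPN
  obtain ⟨h11, h12, h21, h22⟩ := fromBlocks_inj.mp hPN
  rw [fromBlocks_multiply] at hP
  obtain ⟨e11, e12, e21, e22⟩ := fromBlocks_inj.mp hP
  set l₁ := Q11 ⟨0, hm₁⟩ ⟨0, hm₁⟩ with hl1def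
  set l₂ := Q22 ⟨0, hm₂⟩ ⟨0, hm₂⟩ with hl2def
  have hQ11diag : ∀ i : Fin m₁, Q11 i i = l₁ := struct_diag_const h11 hm₁
  have hQ22diag : ∀ i : Fin m₂, Q22 i i = l₂ := struct_diag_const h22 hm₂
  have hl1 : l₁ * l₁ = l₁ := by
    have e := congrFun (congrFun e11 ⟨0, hm₁⟩) ⟨0, hm₁⟩
    rw [Matrix.add_apply, Matrix.mul_apply, Matrix.mul_apply] at e
    have s1 : ∑ k : Fin m₁, Q11 ⟨0, hm₁⟩ k * Q11 k ⟨0, hm₁⟩ = l₁ * l₁ := by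
      rw [Finset.sum_eq_single (⟨0, hm₁⟩ : Fin m₁)
        (fun k _ hk => by
          have hk' : 0 < (k : ℕ) := by
            rcases Nat.eq_zero_or_pos (k : ℕ) with h0 | h0
            · exact absurd (Fin.ext (by simp [h0])) hk
            · exact h0
          rw [struct_lt h11 k ⟨0, hm₁⟩ (by simpa using hk'), mul_zero])
        (by simp)]
    have s2 : ∑ k : Fin m₂, Q12 ⟨0, hm₁⟩ k * Q21 k ⟨0, hm₁⟩ = 0 :=
      Finset.sum_eq_zero fun k _ => by
        rw [struct_diag h21 k ⟨0, hm₁⟩ (by simp; omega), mul_zero]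
    rw [s1, s2] at e
    simpa using e
  have hl2 : l₂ * l₂ = l₂ := by
    have e := congrFun (congrFun e22 ⟨0, hm₂⟩) ⟨0, hm₂⟩
    rw [Matrix.add_apply, Matrix.mul_apply, Matrix.mul_apply] at e
    have s1 : ∑ k : Fin m₁, Q21 ⟨0, hm₂⟩ k * Q12 k ⟨0, hm₂⟩ = 0 :=
      Finset.sum_eq_zero fun k _ => by
        rcases Nat.eq_zero_or_pos (k : ℕ) with h0 | h0
        · rw [struct_diag h21 ⟨0, hm₂⟩ k (by simp [h0]; omega), zero_mul]
        · rw [struct_lt h12 k ⟨0, hm₂⟩ (by simpa using h0), mul_zero]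
    have s2 : ∑ k : Fin m₂, Q22 ⟨0, hm₂⟩ k * Q22 k ⟨0, hm₂⟩ = l₂ * l₂ := by
      rw [Finset.sum_eq_single (⟨0, hm₂⟩ : Fin m₂)
        (fun k _ hk => by
          have hk' : 0 < (k : ℕ) := by
            rcases Nat.eq_zero_or_pos (k : ℕ) with h0 | h0
            · exact absurd (Fin.ext (by simp [h0])) hk
            · exact h0
          rw [struct_lt h22 k ⟨0, hm₂⟩ (by simpa using hk'), mul_zero])
        (by simp)]
    rw [s1, s2] at e
    simpa using e
  set f : Matrix (Fin m₁ ⊕ Fin m₂) (Fin m₁ ⊕ Fin m₂) ℂ :=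
    fromBlocks (l₁ • 1) 0 0 (l₂ • 1) with hfdef
  have hff : f * f = f := by
    rw [hfdef, fromBlocks_multiply]
    simp [Matrix.smul_mul, Matrix.mul_smul, smul_smul, hl1, hl2]
  have hfN : f * N = N * f := by
    rw [hfdef, hNdef, fromBlocks_multiply, fromBlocks_multiply]
    simp [Matrix.smul_mul, Matrix.mul_smul]
  have hfA : f * A = A * f := by
    rw [hAN]
    rw [mul_add, add_mul, hfN, Matrix.mul_smul, Matrix.smul_mul, mul_one, one_mul]
  -- nilpotency of P - f
  set D : Matrix (Fin m₁ ⊕ Fin m₂) (Fin m₁ ⊕ Fin m₂) ℂ :=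
    fromBlocks Q11 Q12 Q21 Q22 - f with hDdef
  set w : Fin m₁ ⊕ Fin m₂ → ℕ :=
    Sum.elim (fun i : Fin m₁ => (i : ℕ) + m₂) (fun i : Fin m₂ => (i : ℕ) + m₁) with hwdef
  have hD : ∀ r c, w c ≤ w r →
      D r c = 0 ∨ ((∃ i, r = Sum.inr i) ∧ (∃ j, c = Sum.inl j) ∧ w c = w r) := by
    rintro (i | i) (j | j) hw
    · left
      have hw' : (j : ℕ) ≤ (i : ℕ) := by simpa [hwdef] using hw
      rcases eq_or_lt_of_le hw' with heq | hlt
      · have hij : i = j := Fin.ext heq.symm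
        subst hij
        simp [hDdef, hfdef, Matrix.sub_apply, fromBlocks_apply₁₁, hQ11diag i,
          Matrix.smul_apply, Matrix.one_apply]
      · simp [hDdef, hfdef, Matrix.sub_apply, fromBlocks_apply₁₁,
          struct_lt h11 i j hlt, Matrix.smul_apply,
          Matrix.one_apply_ne (fun hc : i = j => by omega)]
    · left
      have hw' : (j : ℕ) + m₁ ≤ (i : ℕ) + m₂ := by simpa [hwdef] using hw
      have hlt : (j : ℕ) < (i : ℕ) := by omega
      simp [hDdef, hfdef, Matrix.sub_apply, fromBlocks_apply₁₂, struct_lt h12 i j hlt]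
    · have hw' : (j : ℕ) + m₂ ≤ (i : ℕ) + m₁ := by simpa [hwdef] using hw
      rcases eq_or_lt_of_le hw' with heq | hlt
      · right
        exact ⟨⟨i, rfl⟩, ⟨j, rfl⟩, by simp [hwdef]; omega⟩
      · left
        simp [hDdef, hfdef, Matrix.sub_apply, fromBlocks_apply₂₁, struct_diag h21 i j hlt]
    · left
      have hw' : (j : ℕ) ≤ (i : ℕ) := by simpa [hwdef] using hw
      rcases eq_or_lt_of_le hw' with heq | hlt
      · have hij : i = j := Fin.ext heq.symm
        subst hij
        simp [hDdef, hfdef, Matrix.sub_apply, fromBlocks_apply₂₂, hQ22diag i,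
          Matrix.smul_apply, Matrix.one_apply]
      · simp [hDdef, hfdef, Matrix.sub_apply, fromBlocks_apply₂₂,
          struct_lt h22 i j hlt, Matrix.smul_apply,
          Matrix.one_apply_ne (fun hc : i = j => by omega)]
  have hDD : ∀ r c, w c ≤ w r → (D * D) r c = 0 := by
    intro r c hw
    rw [Matrix.mul_apply]
    refine Finset.sum_eq_zero fun k _ => ?_
    by_cases h1 : w k ≤ w r
    · rcases hD r k h1 with h0 | ⟨⟨i, rfl⟩, ⟨jj, rfl⟩, heq⟩
      · rw [h0, zero_mul]
      · rcases hD (Sum.inl jj) c (by omega) with h0 | ⟨⟨i2, hk2⟩, _, _⟩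
        · rw [h0, mul_zero]
        · exact absurd hk2 (by simp)
    · rcases hD k c (by omega) with h0 | ⟨_, _, heq⟩
      · rw [h0, mul_zero]
      · omega
  have hB : ∀ x, w x < m₁ + m₂ := by
    rintro (i | i) <;> simp [hwdef] <;> omega
  have hDDpow : (D * D) ^ (m₁ + m₂) = 0 := pow_eq_zero_of_weight (D * D) w (m₁ + m₂) hB hDD
  have hnil : IsNilpotent (fromBlocks Q11 Q12 Q21 Q22 - f) := by
    rw [← hDdef]
    exact ⟨2 * (m₁ + m₂), by rw [pow_mul, pow_two, hDDpow]⟩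
  obtain ⟨X, hX, hXA, hXP⟩ :=
    conj_core A (fromBlocks Q11 Q12 Q21 Q22) f hPidem hff hPA hfA hnil
  have c1 : l₁ = 0 ∨ l₁ = 1 := by
    rcases mul_eq_zero.mp (show l₁ * (l₁ - 1) = 0 by ring_nf; linear_combination hl1) with h' | h'
    · exact Or.inl h'
    · exact Or.inr (sub_eq_zero.mp h')
  have c2 : l₂ = 0 ∨ l₂ = 1 := by
    rcases mul_eq_zero.mp (show l₂ * (l₂ - 1) = 0 by ring_nf; linear_combination hl2) with h' | h'
    · exact Or.inl h'
    · exact Or.inr (sub_eq_zero.mp h')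
  rcases c1 with hc1 | hc1 <;> rcases c2 with hc2 | hc2
  · exact ⟨X, hX, hXA, Or.inl (by rw [hXP, hfdef, hc1, hc2]; simp)⟩
  · refine ⟨X, hX, hXA, Or.inr (Or.inr (Or.inr ?_))⟩
    rw [hXP, hfdef, hc1, hc2]; simp
  · refine ⟨X, hX, hXA, Or.inr (Or.inr (Or.inl ?_))⟩
    rw [hXP, hfdef, hc1, hc2]; simp
  · refine ⟨X, hX, hXA, Or.inr (Or.inl ?_)⟩
    rw [hXP, hfdef, hc1, hc2, one_smul, one_smul, fromBlocks_one]
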